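/- arXiv:2112.01981 — 3 statements merged into one kernel-verified Lean document; each statement's English description precedes it below -/
import Mathlib

section
/- Fix m ≥ 2, K ≥ 2, σ_y² > 0, σ_z² > 0, δ ≠ 0, and let c(ρ₀,ρ₁,ρ₂) = 1 + (m−1)ρ₀ − ρ₂ − (m−1)ρ₁ be positive. Under the block exchangeable structure with equal marginal variances, the noncentrality parameter of the test for treatment effect homogeneity with contrast Lβ having ||Lβ||² fixed is proportional to 1/c, and is therefore strictly decreasing in ρ₀ and strictly increasing in ρ₁ and ρ₂. -/
open Matrix

lemma inv_smul_real {K : ℕ} (k : ℝ) (hk : k ≠ 0) (A : Matrix (Fin K) (Fin K) ℝ) :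
    (k • A)⁻¹ = k⁻¹ • A⁻¹ := by
  by_cases h : IsUnit A.det
  · apply Matrix.inv_eq_left_inv
    rw [Matrix.smul_mul, Matrix.mul_smul, Matrix.nonsing_inv_mul A h, smul_smul,
      inv_mul_cancel₀ hk, one_smul]
  · rw [Matrix.nonsing_inv_apply_not_isUnit A h, Matrix.nonsing_inv_apply_not_isUnit, smul_zero]
    rw [Matrix.det_smul]
    simp only [isUnit_iff_ne_zero, not_not] at h ⊢
    simp [h]

/-- under the block exchangeable structure with equal marginal variances,
the noncentrality parameter of the homogeneity test is proportional to 1/c with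
c = 1+(m−1)ρ₀−ρ₂−(m−1)ρ₁ > 0, hence strictly decreasing in ρ₀ and strictly
increasing in ρ₁ and ρ₂. -/
theorem stmt7 {S K : ℕ} (m n : ℕ) (hm : 2 ≤ m) (hK : 2 ≤ K) (hn : 1 ≤ n)
    (sy2 sz2 : ℝ) (hsy : 0 < sy2) (hsz : 0 < sz2)
    (L : Matrix (Fin S) (Fin K) ℝ) (hrow : ∀ s, ∑ k, L s k = 0)
    (β : Fin K → ℝ) :
    let c : ℝ → ℝ → ℝ → ℝ := fun r0 r1 r2 => 1 + ((m:ℝ) - 1) * r0 - r2 - ((m:ℝ) - 1) * r1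
    let Ω : ℝ → ℝ → ℝ → Matrix (Fin K) (Fin K) ℝ := fun r0 r1 r2 =>
      (sy2 / ((m:ℝ) * sz2)) • (c r0 r1 r2 • (1 : Matrix (Fin K) (Fin K) ℝ)
        + (r2 + ((m:ℝ) - 1) * r1) • Matrix.of fun _ _ => (1:ℝ))
    let τ : ℝ → ℝ → ℝ → ℝ := fun r0 r1 r2 =>
      (n:ℝ) * ((L *ᵥ β) ⬝ᵥ ((L * Ω r0 r1 r2 * Lᵀ)⁻¹ *ᵥ (L *ᵥ β)))
    let τ0 : ℝ := (n:ℝ) * ((L *ᵥ β) ⬝ᵥ ((L * Lᵀ)⁻¹ *ᵥ (L *ᵥ β)))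
    (∀ r0 r1 r2 : ℝ, 0 < c r0 r1 r2 →
        L * Ω r0 r1 r2 * Lᵀ = (sy2 * c r0 r1 r2 / ((m:ℝ) * sz2)) • (L * Lᵀ)) ∧
    (∀ r0 r1 r2 : ℝ, 0 < c r0 r1 r2 →
        τ r0 r1 r2 = ((m:ℝ) * sz2 / (sy2 * c r0 r1 r2)) * τ0) ∧
    (0 < τ0 →
      (∀ r0 r0' r1 r2 : ℝ, 0 < c r0 r1 r2 → 0 < c r0' r1 r2 → r0 < r0' →
        τ r0' r1 r2 < τ r0 r1 r2) ∧
      (∀ r0 r1 r1' r2 : ℝ, 0 < c r0 r1 r2 → 0 < c r0 r1' r2 → r1 < r1' →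
        τ r0 r1 r2 < τ r0 r1' r2) ∧
      (∀ r0 r1 r2 r2' : ℝ, 0 < c r0 r1 r2 → 0 < c r0 r1 r2' → r2 < r2' →
        τ r0 r1 r2 < τ r0 r1 r2')) := by
  intro c Ω τ τ0
  have hm1 : (0:ℝ) < (m:ℝ) := by positivity
  have hmsz : (0:ℝ) < (m:ℝ) * sz2 := by positivity
  have hLJ : L * (Matrix.of fun _ _ => (1:ℝ) : Matrix (Fin K) (Fin K) ℝ) = 0 := by
    ext s k
    simp [Matrix.mul_apply, hrow s]
  have key : ∀ r0 r1 r2 : ℝ,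
      L * Ω r0 r1 r2 * Lᵀ = (sy2 * c r0 r1 r2 / ((m:ℝ) * sz2)) • (L * Lᵀ) := by
    intro r0 r1 r2
    show L * ((sy2 / ((m:ℝ) * sz2)) • (c r0 r1 r2 • (1 : Matrix (Fin K) (Fin K) ℝ)
        + (r2 + ((m:ℝ) - 1) * r1) • (Matrix.of fun _ _ => (1:ℝ) : Matrix (Fin K) (Fin K) ℝ))) * Lᵀ
      = (sy2 * c r0 r1 r2 / ((m:ℝ) * sz2)) • (L * Lᵀ)
    rw [Matrix.mul_smul, Matrix.mul_add, Matrix.mul_smul, Matrix.mul_smul, hLJ,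
      smul_zero, add_zero, Matrix.mul_one, Matrix.smul_mul, Matrix.smul_mul, smul_smul]
    congr 1
    field_simp
  have keyτ : ∀ r0 r1 r2 : ℝ, 0 < c r0 r1 r2 →
      τ r0 r1 r2 = ((m:ℝ) * sz2 / (sy2 * c r0 r1 r2)) * τ0 := by
    intro r0 r1 r2 hc
    have ha : sy2 * c r0 r1 r2 / ((m:ℝ) * sz2) ≠ 0 := by positivity
    show (n:ℝ) * ((L *ᵥ β) ⬝ᵥ ((L * Ω r0 r1 r2 * Lᵀ)⁻¹ *ᵥ (L *ᵥ β))) = _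
    rw [key r0 r1 r2, inv_smul_real _ ha, Matrix.smul_mulVec, dotProduct_smul]
    show (n:ℝ) * ((sy2 * c r0 r1 r2 / ((m:ℝ) * sz2))⁻¹ *
      ((L *ᵥ β) ⬝ᵥ ((L * Lᵀ)⁻¹ *ᵥ (L *ᵥ β)))) = _
    have : (sy2 * c r0 r1 r2 / ((m:ℝ) * sz2))⁻¹ = (m:ℝ) * sz2 / (sy2 * c r0 r1 r2) := by
      rw [inv_div]
    rw [this]; show _ = _ * ((n:ℝ) * ((L *ᵥ β) ⬝ᵥ ((L * Lᵀ)⁻¹ *ᵥ (L *ᵥ β)))); ring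
  refine ⟨fun r0 r1 r2 _ => key r0 r1 r2, keyτ, fun hτ0 => ?_⟩
  have mono : ∀ r0 r1 r2 r0' r1' r2' : ℝ, 0 < c r0 r1 r2 → 0 < c r0' r1' r2' →
      c r0' r1' r2' < c r0 r1 r2 → τ r0 r1 r2 < τ r0' r1' r2' := by
    intro r0 r1 r2 r0' r1' r2' h1 h2 hlt
    rw [keyτ _ _ _ h1, keyτ _ _ _ h2]
    apply mul_lt_mul_of_pos_right _ hτ0
    apply div_lt_div_of_pos_left hmsz (by positivity)
    exact mul_lt_mul_of_pos_left hlt hsy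
  have hm2 : (0:ℝ) < (m:ℝ) - 1 := by
    have : (2:ℝ) ≤ (m:ℝ) := by exact_mod_cast hm
    linarith
  refine ⟨fun r0 r0' r1 r2 h1 h2 hlt => mono _ _ _ _ _ _ h2 h1 ?_,
    fun r0 r1 r1' r2 h1 h2 hlt => mono _ _ _ _ _ _ h1 h2 ?_,
    fun r0 r1 r2 r2' h1 h2 hlt => mono _ _ _ _ _ _ h1 h2 ?_⟩ <;>
    · show (1:ℝ) + _ - _ - _ < 1 + _ - _ - _
      nlinarith
end

section
/- Under the multivariate linear mixed model with equal cluster sizes m and treatment indicator z_i centered at z̄, the FGLS estimator of the treatment effect vector satisfies β̂ = [Σ_i (z_i − z̄)²]⁻¹ Σ_i Σ_j m⁻¹ (z_i − z̄) y_{ij}; in particular β̂ does not depend on the covariance matrices Σ_φ, Σ_e. Formally: let W_i = 1_m ⊗ (I_K, (z_i − z̄) I_K) and V = I_m ⊗ Σ_e + J_m ⊗ Σ_φ with Σ_e, Σ_φ positive definite; if Σ_i (z_i − z̄) = 0 and Σ_i (z_i − z̄)² > 0, then the lower K-block of (Σ_i W_i^T V⁻¹ W_i)⁻¹ (Σ_i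 W_i^T V⁻¹ y_i) equals the stated expression, independent of Σ_e and Σ_φ. -/
open Matrix

namespace Stmt14

def kron (m K : ℕ) (A B : Matrix (Fin K) (Fin K) ℝ) :
    Matrix (Fin m × Fin K) (Fin m × Fin K) ℝ :=
  Matrix.of fun p q => (if p.1 = q.1 then A p.2 q.2 else 0) + B p.2 q.2

lemma kron_mul {m K : ℕ} (A B C E : Matrix (Fin K) (Fin K) ℝ) :
    kron m K A B * kron m K C E
      = kron m K (A * C) (A * E + B * C + (m:ℝ) • (B * E)) := by
  ext ⟨j,k⟩ ⟨j',k'⟩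
  simp only [mul_apply, kron, of_apply, Fintype.sum_prod_type, add_mul, mul_add,
    ite_mul, mul_ite, zero_mul, mul_zero, Finset.sum_add_distrib,
    Finset.sum_ite_eq, Finset.sum_ite_eq', Finset.mem_univ, if_true,
    Finset.sum_const, Finset.card_univ, Fintype.card_fin, nsmul_eq_mul,
    Matrix.add_apply, Matrix.smul_apply, smul_eq_mul, Finset.mul_sum]
  by_cases h : j = j' <;> simp [h, Finset.sum_add_distrib, mul_comm] <;> ring_nf <;>
    (congr 1; exact Finset.sum_congr rfl fun _ _ => by ring)

lemma kron_one_zero {m K : ℕ} : kron m K 1 0 = 1 := by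
  ext ⟨j,k⟩ ⟨j',k'⟩
  simp [kron, Matrix.one_apply, Prod.ext_iff, ite_and]

def Umat (m K : ℕ) : Matrix (Fin m × Fin K) (Fin K) ℝ :=
  Matrix.of fun p k => if p.2 = k then 1 else 0

lemma transpose_U_mul_kron {m K : ℕ} (A B : Matrix (Fin K) (Fin K) ℝ) :
    (Umat m K)ᵀ * kron m K A B = (A + (m:ℝ) • B) * (Umat m K)ᵀ := by
  ext k ⟨j',k'⟩
  simp [mul_apply, kron, Umat, Fintype.sum_prod_type, ite_mul, mul_ite,
    Finset.sum_ite_eq, Finset.sum_ite_eq', Finset.sum_add_distrib, mul_comm]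

lemma transpose_U_mul_U {m K : ℕ} :
    (Umat m K)ᵀ * Umat m K = (m:ℝ) • (1 : Matrix (Fin K) (Fin K) ℝ) := by
  ext k k'
  by_cases h : k = k' <;>
    simp [mul_apply, Umat, Fintype.sum_prod_type, ite_and, Matrix.one_apply, h,
      Finset.sum_ite_eq, Finset.sum_ite_eq', eq_comm]

lemma sum_fromBlocks {ι n₁ n₂ m₁ m₂ : Type*} [Fintype ι]
    (f : ι → Matrix n₁ m₁ ℝ) (g : ι → Matrix n₁ m₂ ℝ)
    (h : ι → Matrix n₂ m₁ ℝ) (t : ι → Matrix n₂ m₂ ℝ) :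
    ∑ i, fromBlocks (f i) (g i) (h i) (t i)
      = fromBlocks (∑ i, f i) (∑ i, g i) (∑ i, h i) (∑ i, t i) := by
  ext (a|a) (b|b) <;> simp [Matrix.sum_apply, fromBlocks]

lemma sum_elim_sum {ι n₁ n₂ : Type*} [Fintype ι]
    (f : ι → n₁ → ℝ) (g : ι → n₂ → ℝ) :
    ∑ i, Sum.elim (f i) (g i) = Sum.elim (∑ i, f i) (∑ i, g i) := by
  ext (a|a) <;> simp [Finset.sum_apply]

lemma mulVec_sum' {ι n₁ n₂ : Type*} [Fintype ι] [Fintype n₂]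
    (M : Matrix n₁ n₂ ℝ) (f : ι → n₂ → ℝ) :
    M *ᵥ (∑ i, f i) = ∑ i, M *ᵥ f i := by
  ext a
  simp only [Matrix.mulVec, dotProduct, Finset.sum_apply, Finset.mul_sum]
  exact Finset.sum_comm

end Stmt14

open Stmt14 in
/-- under the MLMM with equal cluster sizes, the FGLS estimator
of the treatment effect vector is
β̂ = [Σ_i (z_i − z̄)²]⁻¹ Σ_i Σ_j m⁻¹ (z_i − z̄) y_{ij}; in particular it does
not depend on Σ_φ, Σ_e. -/
theorem stmt14 {K m n : ℕ} (hm : 1 ≤ m) (hn : 1 ≤ n)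
    (Se Sp : Matrix (Fin K) (Fin K) ℝ) (hSe : Se.PosDef) (hSp : Sp.PosDef)
    (z : Fin n → ℝ) (zbar : ℝ)
    (hc : ∑ i, (z i - zbar) = 0) (hv : 0 < ∑ i, (z i - zbar)^2)
    (y : Fin n → (Fin m × Fin K) → ℝ) :
    let V : Matrix (Fin m × Fin K) (Fin m × Fin K) ℝ :=
      Matrix.of fun p q => (if p.1 = q.1 then Se p.2 q.2 else 0) + Sp p.2 q.2
    let W : Fin n → Matrix (Fin m × Fin K) (Fin K ⊕ Fin K) ℝ :=
      fun i => Matrix.of fun p q =>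
        Sum.elim (fun k' => if p.2 = k' then (1:ℝ) else 0)
                 (fun k' => if p.2 = k' then z i - zbar else 0) q
    let θhat : (Fin K ⊕ Fin K) → ℝ :=
      (∑ i, (W i)ᵀ * V⁻¹ * W i)⁻¹ *ᵥ (∑ i, (W i)ᵀ *ᵥ (V⁻¹ *ᵥ y i))
    ∀ k : Fin K, θhat (Sum.inr k)
      = (∑ i, (z i - zbar)^2)⁻¹ * ∑ i, ∑ j : Fin m,
          (1 / (m:ℝ)) * (z i - zbar) * y i (j, k) := by
  intro V W θhat k
  have hm0 : (m:ℝ) ≠ 0 := Nat.cast_ne_zero.mpr (by omega)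
  have hn0 : (n:ℝ) ≠ 0 := Nat.cast_ne_zero.mpr (by omega)
  set c : Fin n → ℝ := fun i => z i - zbar with hcdef
  set Q : ℝ := ∑ i, (z i - zbar)^2 with hQdef
  have hQ0 : Q ≠ 0 := ne_of_gt hv
  set T : Matrix (Fin K) (Fin K) ℝ := Se + (m:ℝ) • Sp with hTdef
  have hSpm : ((m:ℝ) • Sp).PosSemidef := by
    refine ⟨?_, fun x => ?_⟩
    · have hspt : Spᵀ = Sp := Matrix.IsSymm.eq (by simpa using hSp.1)
      show ((m:ℝ) • Sp)ᴴ = _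
      rw [conjTranspose_smul]
      simp [hspt]
    · exact (hSp.posSemidef.smul (by positivity : (0:ℝ) ≤ m)).2 x
  have hT : T.PosDef := hSe.add_posSemidef hSpm
  have hSedet : IsUnit Se.det := (Matrix.isUnit_iff_isUnit_det _).mp hSe.isUnit
  have hTdet : IsUnit T.det := (Matrix.isUnit_iff_isUnit_det _).mp hT.isUnit
  have hSe1 : Se * Se⁻¹ = 1 := Matrix.mul_nonsing_inv _ hSedet
  have hT1 : T * T⁻¹ = 1 := Matrix.mul_nonsing_inv _ hTdet
  have hmm : (m:ℝ) * (1/(m:ℝ)) = 1 := by field_simp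
  have hmm' : (1/(m:ℝ)) * (m:ℝ) = 1 := by field_simp
  -- the explicit inverse of V
  set Vi : Matrix (Fin m × Fin K) (Fin m × Fin K) ℝ :=
    kron m K Se⁻¹ ((1/(m:ℝ)) • (T⁻¹ - Se⁻¹)) with hVidef
  have hVkron : V = kron m K Se Sp := rfl
  have hSeT : Se * T⁻¹ = 1 - (m:ℝ) • (Sp * T⁻¹) := by
    have := hT1
    rw [hTdef, add_mul, smul_mul_assoc] at this
    linear_combination (norm := abel) this
  have hVVi : V * Vi = 1 := by
    rw [hVkron, hVidef, kron_mul]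
    have h2 : Se * ((1/(m:ℝ)) • (T⁻¹ - Se⁻¹)) + Sp * Se⁻¹
        + (m:ℝ) • (Sp * ((1/(m:ℝ)) • (T⁻¹ - Se⁻¹))) = 0 := by
      rw [mul_smul_comm, mul_smul_comm, smul_smul, hmm, one_smul,
        mul_sub, mul_sub, hSe1, hSeT]
      rw [smul_sub, smul_sub, smul_smul, hmm', one_smul]
      abel
    rw [hSe1, h2, kron_one_zero]
  have hVinv : V⁻¹ = Vi := Matrix.inv_eq_right_inv hVVi
  -- key products
  have hUVi : (Umat m K)ᵀ * Vi = T⁻¹ * (Umat m K)ᵀ := by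
    rw [hVidef, transpose_U_mul_kron, smul_smul, hmm, one_smul, add_sub_cancel]
  have hW : ∀ i, W i = fromCols (Umat m K) (c i • Umat m K) := by
    intro i
    ext p (k'|k') <;>
      simp [W, Umat, fromCols, Matrix.smul_apply, smul_eq_mul, mul_ite, hcdef]
  have hWtV : ∀ i, (W i)ᵀ * V⁻¹
      = fromRows (T⁻¹ * (Umat m K)ᵀ) (c i • (T⁻¹ * (Umat m K)ᵀ)) := by
    intro i
    rw [hW, transpose_fromCols, transpose_smul, fromRows_mul, hVinv, hUVi,
      Matrix.smul_mul, hUVi]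
  set A := ∑ i, (W i)ᵀ * V⁻¹ * W i with hAdef
  set b := ∑ i, (W i)ᵀ *ᵥ (V⁻¹ *ᵥ y i) with hbdef
  set Mm : Matrix (Fin K) (Fin K) ℝ := (m:ℝ) • T⁻¹ with hMmdef
  have hRU : (T⁻¹ * (Umat m K)ᵀ) * Umat m K = Mm := by
    rw [Matrix.mul_assoc, transpose_U_mul_U, Matrix.mul_smul, Matrix.mul_one]
  have hterm : ∀ i, (W i)ᵀ * V⁻¹ * W i
      = fromBlocks Mm (c i • Mm) (c i • Mm) ((c i ^ 2) • Mm) := by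
    intro i
    rw [hWtV i, hW i, fromRows_mul_fromCols]
    simp only [Matrix.smul_mul, Matrix.mul_smul, smul_smul, hRU]
    rw [← pow_two]
  have hA : A = fromBlocks ((n:ℝ) • Mm) 0 0 (Q • Mm) := by
    rw [hAdef]
    rw [Finset.sum_congr rfl fun i _ => hterm i, sum_fromBlocks]
    have e1 : (∑ _i : Fin n, Mm) = (n:ℝ) • Mm := by
      simp [Finset.sum_const, Nat.cast_smul_eq_nsmul]
    have e2 : (∑ i, c i • Mm) = (0:Matrix (Fin K) (Fin K) ℝ) := by
      rw [← Finset.sum_smul, hc, zero_smul]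
    have e3 : (∑ i, (c i ^ 2) • Mm) = Q • Mm := by
      rw [← Finset.sum_smul]
    rw [e1, e2, e3]
  set g : Fin n → Fin K → ℝ := fun i => (Umat m K)ᵀ *ᵥ y i with hgdef
  have hbterm : ∀ i, (W i)ᵀ *ᵥ (V⁻¹ *ᵥ y i)
      = Sum.elim (T⁻¹ *ᵥ g i) (c i • (T⁻¹ *ᵥ g i)) := by
    intro i
    rw [Matrix.mulVec_mulVec, hWtV i, fromRows_mulVec, Matrix.smul_mulVec,
      ← Matrix.mulVec_mulVec, hgdef]
  have hb : b = Sum.elim (T⁻¹ *ᵥ ∑ i, g i) (T⁻¹ *ᵥ ∑ i, c i • g i) := by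
    rw [hbdef, Finset.sum_congr rfl fun i _ => hbterm i, sum_elim_sum,
      mulVec_sum', mulVec_sum']
    simp [Matrix.mulVec_smul]
  set θ : (Fin K ⊕ Fin K) → ℝ :=
    Sum.elim (((n:ℝ)*(m:ℝ))⁻¹ • ∑ i, g i) ((Q*(m:ℝ))⁻¹ • ∑ i, c i • g i) with hθdef
  have key : ∀ a : ℝ, a ≠ 0 → ∀ w : Fin K → ℝ,
      (a • Mm) *ᵥ ((a*(m:ℝ))⁻¹ • w) = T⁻¹ *ᵥ w := by
    intro a ha w
    rw [hMmdef, smul_smul, Matrix.smul_mulVec, Matrix.mulVec_smul, smul_smul,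
      mul_inv_cancel₀ (mul_ne_zero ha hm0), one_smul]
  have hAθ : A *ᵥ θ = b := by
    rw [hA, hb, hθdef, fromBlocks_mulVec]
    simp only [Sum.elim_comp_inl, Sum.elim_comp_inr, Matrix.zero_mulVec, add_zero,
      zero_add]
    rw [key (n:ℝ) hn0, key Q hQ0]
  have hMmdet : Mm.det ≠ 0 := by
    rw [hMmdef, det_smul]
    exact mul_ne_zero (pow_ne_zero _ hm0) (ne_of_gt hT.inv.det_pos)
  have hAdet : IsUnit A.det := by
    rw [hA, det_fromBlocks_zero₁₂]
    refine (mul_ne_zero ?_ ?_).isUnit <;> rw [det_smul]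
    · exact mul_ne_zero (pow_ne_zero _ hn0) hMmdet
    · exact mul_ne_zero (pow_ne_zero _ hQ0) hMmdet
  have hθhat : θhat = θ := by
    calc θhat = A⁻¹ *ᵥ b := rfl
    _ = A⁻¹ *ᵥ (A *ᵥ θ) := by rw [hAθ]
    _ = (A⁻¹ * A) *ᵥ θ := by rw [Matrix.mulVec_mulVec]
    _ = θ := by rw [Matrix.nonsing_inv_mul A hAdet, Matrix.one_mulVec]
  have hg : ∀ i, g i k = ∑ j : Fin m, y i (j, k) := by
    intro i
    simp [hgdef, Umat, Matrix.mulVec, dotProduct, Fintype.sum_prod_type,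
      transpose_apply, ite_mul, one_mul, zero_mul, Finset.sum_ite_eq,
      Finset.sum_ite_eq']
  have hval : θhat (Sum.inr k) = (Q*(m:ℝ))⁻¹ * ∑ i, c i * g i k := by
    rw [hθhat, hθdef]
    simp [Finset.sum_apply, Pi.smul_apply, smul_eq_mul]
  rw [hval]
  have hS : ∑ i, ∑ j : Fin m, (1/(m:ℝ)) * (z i - zbar) * y i (j,k)
      = (1/(m:ℝ)) * ∑ i, c i * g i k := by
    rw [Finset.mul_sum]
    refine Finset.sum_congr rfl fun i _ => ?_
    rw [hg i, Finset.mul_sum, Finset.mul_sum]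
    refine Finset.sum_congr rfl fun j _ => ?_
    simp only [hcdef]
    ring
  rw [hS, mul_inv]
  ring
end

section
/- Under the multivariate linear mixed model with equal cluster sizes, with W_i = 1_m ⊗ (I_K, (z_i − z̄)I_K), V⁻¹ as above, and Σ_i(z_i − z̄) = 0, the information matrix Σ_i W_i^T V⁻¹ W_i is block diagonal with lower-right K×K block equal to [Σ_i (z_i − z̄)²] · m (Σ_e + m Σ_φ)⁻¹. Consequently, the asymptotic covariance of √n(β̂ − β) equals Ω_β = (Σ_e + m Σ_φ)/(m σ_z²) where σ_z² = n⁻¹ Σ_i (z_i − z̄)². -/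
open Matrix


lemma quadform_eq {K m : ℕ} (Se Sp : Matrix (Fin K) (Fin K) ℝ) (x : Fin m × Fin K → ℝ) :
    x ⬝ᵥ ((Matrix.of fun (p q : Fin m × Fin K) =>
      (if p.1 = q.1 then Se p.2 q.2 else 0) + Sp p.2 q.2) *ᵥ x)
    = (∑ j : Fin m, (fun k => x (j,k)) ⬝ᵥ (Se *ᵥ fun k => x (j,k)))
      + (fun k => ∑ j : Fin m, x (j,k)) ⬝ᵥ (Sp *ᵥ fun k => ∑ j : Fin m, x (j,k)) := by
  have inner : ∀ p : Fin m × Fin K,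
      (∑ q : Fin m × Fin K, ((if p.1 = q.1 then Se p.2 q.2 else 0) + Sp p.2 q.2) * x q)
      = (∑ k', Se p.2 k' * x (p.1, k')) + ∑ k', Sp p.2 k' * ∑ j', x (j', k') := by
    intro p
    rw [Fintype.sum_prod_type]
    simp only [add_mul, Finset.sum_add_distrib, ite_mul, zero_mul]
    congr 1
    · simp [Finset.sum_ite_irrel, Finset.sum_ite_eq]
    · rw [Finset.sum_comm]
      exact Finset.sum_congr rfl fun k' _ => by rw [Finset.mul_sum]
  simp only [dotProduct, mulVec, of_apply]
  rw [Finset.sum_congr rfl fun p _ => by rw [inner p]]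
  simp only [mul_add, Finset.sum_add_distrib]
  congr 1
  · rw [Fintype.sum_prod_type]
  · rw [Fintype.sum_prod_type, Finset.sum_comm]
    exact Finset.sum_congr rfl fun k _ => by rw [Finset.sum_mul]

lemma aux_posdef {K m : ℕ} (hm : 1 ≤ m) (Se Sp : Matrix (Fin K) (Fin K) ℝ)
    (hSe : Se.PosDef) (hSp : Sp.PosDef) :
    (Matrix.of fun (p q : Fin m × Fin K) =>
      (if p.1 = q.1 then Se p.2 q.2 else 0) + Sp p.2 q.2).PosDef := by
  rw [posDef_iff_dotProduct_mulVec]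
  constructor
  · ext p q
    simp only [conjTranspose_apply, of_apply, star_trivial]
    have h1 : Se q.2 p.2 = Se p.2 q.2 := by
      conv_lhs => rw [← hSe.1]
      simp [conjTranspose_apply]
    have h2 : Sp q.2 p.2 = Sp p.2 q.2 := by
      conv_lhs => rw [← hSp.1]
      simp [conjTranspose_apply]
    rw [h1, h2]
    congr 1
    simp [eq_comm]
  · intro x hx
    rw [star_trivial, quadform_eq]
    have h2 : 0 ≤ (fun k => ∑ j : Fin m, x (j,k)) ⬝ᵥ (Sp *ᵥ fun k => ∑ j : Fin m, x (j,k)) := by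
      simpa using hSp.posSemidef.dotProduct_mulVec_nonneg (fun k => ∑ j : Fin m, x (j,k))
    have h1 : 0 < ∑ j : Fin m, (fun k => x (j,k)) ⬝ᵥ (Se *ᵥ fun k => x (j,k)) := by
      obtain ⟨⟨j0, k0⟩, hp⟩ : ∃ p, x p ≠ 0 := by
        by_contra h
        push_neg at h
        exact hx (funext h)
      refine Finset.sum_pos' (fun j _ => by simpa using hSe.posSemidef.dotProduct_mulVec_nonneg (fun k => x (j,k)))
        ⟨j0, Finset.mem_univ _, ?_⟩
      have : (fun k => x (j0, k)) ≠ 0 := fun h => hp (by simpa using congrFun h k0)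
      simpa using hSe.dotProduct_mulVec_pos this
    linarith

lemma V_mulVec {K m : ℕ} (Se Sp : Matrix (Fin K) (Fin K) ℝ) (x : Fin K → ℝ) :
    ((Matrix.of fun (p q : Fin m × Fin K) =>
      (if p.1 = q.1 then Se p.2 q.2 else 0) + Sp p.2 q.2) *ᵥ fun p => x p.2)
    = fun p => ((Se + (m:ℝ) • Sp) *ᵥ x) p.2 := by
  funext p
  simp only [mulVec, dotProduct, of_apply, Fintype.sum_prod_type, add_mul, ite_mul, zero_mul,
    Finset.sum_add_distrib, Finset.sum_ite_irrel, Finset.sum_const_zero, Finset.sum_ite_eq,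
    Finset.mem_univ, if_true, Matrix.add_apply, Matrix.smul_apply, smul_eq_mul, mul_zero,
    Finset.sum_const, Finset.card_univ, Fintype.card_fin]
  rw [nsmul_eq_mul, Finset.mul_sum]
  congr 1
  exact Finset.sum_congr rfl fun k _ => by ring

/-- the information matrix Σ_i Wᵢᵀ V⁻¹ Wᵢ is block diagonal with
lower-right K×K block [Σ_i (z_i−z̄)²]·m(Σ_e+mΣ_φ)⁻¹, hence the scaled covariance
of the FGLS treatment effect estimator is Ω_β = (Σ_e + m Σ_φ)/(m σ_z²) with
σ_z² = n⁻¹ Σ_i (z_i − z̄)². -/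
theorem stmt15 {K m n : ℕ} (hm : 1 ≤ m) (hn : 1 ≤ n)
    (Se Sp : Matrix (Fin K) (Fin K) ℝ) (hSe : Se.PosDef) (hSp : Sp.PosDef)
    (z : Fin n → ℝ) (zbar : ℝ)
    (hc : ∑ i, (z i - zbar) = 0) (hv : 0 < ∑ i, (z i - zbar)^2) :
    let V : Matrix (Fin m × Fin K) (Fin m × Fin K) ℝ :=
      Matrix.of fun p q => (if p.1 = q.1 then Se p.2 q.2 else 0) + Sp p.2 q.2
    let W : Fin n → Matrix (Fin m × Fin K) (Fin K ⊕ Fin K) ℝ :=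
      fun i => Matrix.of fun p q =>
        Sum.elim (fun k' => if p.2 = k' then (1:ℝ) else 0)
                 (fun k' => if p.2 = k' then z i - zbar else 0) q
    let U := ∑ i, (W i)ᵀ * V⁻¹ * W i
    let sz2 : ℝ := (1 / (n:ℝ)) * ∑ i, (z i - zbar)^2
    (∀ k k' : Fin K, U (Sum.inl k) (Sum.inr k') = 0 ∧ U (Sum.inr k) (Sum.inl k') = 0) ∧
    (∀ k k' : Fin K, U (Sum.inr k) (Sum.inr k')
        = (∑ i, (z i - zbar)^2) * ((m:ℝ) * (Se + (m:ℝ) • Sp)⁻¹ k k')) ∧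
    (∀ k k' : Fin K, (n:ℝ) * U⁻¹ (Sum.inr k) (Sum.inr k')
        = (1 / ((m:ℝ) * sz2)) * (Se + (m:ℝ) • Sp) k k') := by
  intro V W U sz2
  have hm0 : (0:ℝ) < (m:ℝ) := by exact_mod_cast hm
  have hn0 : (0:ℝ) < (n:ℝ) := by exact_mod_cast hn
  set S : Matrix (Fin K) (Fin K) ℝ := Se + (m:ℝ) • Sp with hSdef
  -- S is PosDef
  have hSpd : S.PosDef := by
    rw [posDef_iff_dotProduct_mulVec]
    constructor
    · refine hSe.1.add ?_
      rw [Matrix.IsHermitian, conjTranspose_smul, star_trivial, hSp.1]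
    · intro x hx
      rw [add_mulVec, dotProduct_add, smul_mulVec, dotProduct_smul, smul_eq_mul]
      have h1 := hSe.dotProduct_mulVec_pos hx
      have h2 := hSp.dotProduct_mulVec_pos hx
      rw [star_trivial] at h1 h2 ⊢
      nlinarith
  have hVpd := aux_posdef hm Se Sp hSe hSp
  have hVdet : IsUnit V.det := hVpd.det_pos.ne'.isUnit
  have hSdet : IsUnit S.det := hSpd.det_pos.ne'.isUnit
  -- key: V⁻¹ acting on constant-over-cluster vectors
  have hkey : ∀ x : Fin K → ℝ, (V⁻¹ *ᵥ fun p => x p.2) = fun p => (S⁻¹ *ᵥ x) p.2 := by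
    intro x
    have h1 : (V *ᵥ fun p => (S⁻¹ *ᵥ x) p.2) = fun p => x p.2 := by
      rw [show (V *ᵥ fun p => (S⁻¹ *ᵥ x) p.2) = fun p => (S *ᵥ (S⁻¹ *ᵥ x)) p.2 from
        V_mulVec Se Sp _]
      funext p
      rw [mulVec_mulVec, Matrix.mul_nonsing_inv _ hSdet, one_mulVec]
    rw [← h1, mulVec_mulVec, Matrix.nonsing_inv_mul _ hVdet, one_mulVec]
  have hcol : ∀ (c : ℝ) (k' : Fin K) (p : Fin m × Fin K),
      (V⁻¹ *ᵥ fun q : Fin m × Fin K => if q.2 = k' then c else 0) p = c * S⁻¹ p.2 k' := by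
    intro c k' p
    have h := congrFun (hkey fun t => if t = k' then c else 0) p
    simpa [mulVec, dotProduct, mul_ite, mul_zero, Finset.sum_ite_eq', mul_comm] using h
  have hmain : ∀ (c d : ℝ) (k k' : Fin K),
      (∑ p : Fin m × Fin K, (if p.2 = k then c else 0) *
        (V⁻¹ *ᵥ fun q : Fin m × Fin K => if q.2 = k' then d else 0) p)
      = c * d * ((m:ℝ) * S⁻¹ k k') := by
    intro c d k k'
    simp only [hcol]
    rw [Fintype.sum_prod_type]
    simp only [ite_mul, zero_mul, Finset.sum_ite_eq', Finset.mem_univ, if_true,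
      Finset.sum_const, Finset.card_univ, Fintype.card_fin, nsmul_eq_mul]
    ring
  have hUent : ∀ (a b : Fin K ⊕ Fin K),
      U a b = ∑ i, ∑ p : Fin m × Fin K, W i p a * (V⁻¹ *ᵥ fun q => W i q b) p := by
    intro a b
    show (∑ i, (W i)ᵀ * V⁻¹ * W i) a b = _
    rw [Matrix.sum_apply]
    refine Finset.sum_congr rfl fun i _ => ?_
    rw [Matrix.mul_assoc, Matrix.mul_apply]
    refine Finset.sum_congr rfl fun p _ => ?_
    rw [Matrix.transpose_apply, Matrix.mul_apply]
    rfl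
  have hW1 : ∀ i (p : Fin m × Fin K) (k : Fin K),
      W i p (Sum.inl k) = if p.2 = k then (1:ℝ) else 0 := fun _ _ _ => rfl
  have hW2 : ∀ i (p : Fin m × Fin K) (k : Fin K),
      W i p (Sum.inr k) = if p.2 = k then z i - zbar else 0 := fun _ _ _ => rfl
  have hll : ∀ k k' : Fin K, U (Sum.inl k) (Sum.inl k') = (n:ℝ) * ((m:ℝ) * S⁻¹ k k') := by
    intro k k'
    rw [hUent]
    simp only [hW1]
    rw [Finset.sum_congr rfl fun i _ => hmain 1 1 k k']
    simp [mul_assoc]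
  have hlr : ∀ k k' : Fin K, U (Sum.inl k) (Sum.inr k') = 0 := by
    intro k k'
    rw [hUent]
    simp only [hW1, hW2]
    rw [Finset.sum_congr rfl fun i _ => hmain 1 (z i - zbar) k k']
    simp only [one_mul]
    rw [← Finset.sum_mul, hc, zero_mul]
  have hrl : ∀ k k' : Fin K, U (Sum.inr k) (Sum.inl k') = 0 := by
    intro k k'
    rw [hUent]
    simp only [hW1, hW2]
    rw [Finset.sum_congr rfl fun i _ => hmain (z i - zbar) 1 k k']
    simp only [mul_one]
    rw [← Finset.sum_mul, hc, zero_mul]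
  have hrr : ∀ k k' : Fin K, U (Sum.inr k) (Sum.inr k')
      = (∑ i, (z i - zbar)^2) * ((m:ℝ) * S⁻¹ k k') := by
    intro k k'
    rw [hUent]
    simp only [hW2]
    rw [Finset.sum_congr rfl fun i _ => hmain (z i - zbar) (z i - zbar) k k',
      ← Finset.sum_mul]
    congr 1
    exact Finset.sum_congr rfl fun i _ => (sq (z i - zbar)).symm
  refine ⟨fun k k' => ⟨hlr k k', hrl k k'⟩, hrr, ?_⟩
  -- Part 3
  set Sz : ℝ := ∑ i, (z i - zbar)^2 with hSzdef
  have hUeq : U = Matrix.fromBlocks ((n:ℝ) • ((m:ℝ) • S⁻¹)) 0 0 (Sz • ((m:ℝ) • S⁻¹)) := by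
    ext a b
    cases a with
    | inl k => cases b with
      | inl k' => simpa [smul_eq_mul, mul_assoc] using hll k k'
      | inr k' => simpa using hlr k k'
    | inr k => cases b with
      | inl k' => simpa using hrl k k'
      | inr k' => simpa [smul_eq_mul, mul_assoc] using hrr k k'
  have hinv : U⁻¹ = Matrix.fromBlocks ((1/((n:ℝ)*(m:ℝ))) • S) 0 0 ((1/(Sz*(m:ℝ))) • S) := by
    apply Matrix.inv_eq_right_inv
    rw [hUeq, Matrix.fromBlocks_multiply]
    simp only [Matrix.mul_zero, Matrix.zero_mul, add_zero, zero_add]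
    rw [Matrix.smul_mul, Matrix.smul_mul, Matrix.mul_smul,
      Matrix.nonsing_inv_mul _ hSdet, smul_smul, smul_smul,
      Matrix.smul_mul, Matrix.smul_mul, Matrix.mul_smul,
      Matrix.nonsing_inv_mul _ hSdet, smul_smul, smul_smul]
    have e1 : (n:ℝ) * (m:ℝ) * (1/((n:ℝ)*(m:ℝ))) = 1 := by
      field_simp
    have e2 : Sz * (m:ℝ) * (1/(Sz*(m:ℝ))) = 1 := by
      field_simp
    rw [e1, e2, one_smul, Matrix.fromBlocks_one]
  intro k k'
  rw [hinv]
  show (n:ℝ) * ((1/(Sz*(m:ℝ))) • S) k k'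
      = (1 / ((m:ℝ) * ((1/(n:ℝ)) * Sz))) * S k k'
  rw [Matrix.smul_apply, smul_eq_mul]
  have : (n:ℝ) * (1/(Sz*(m:ℝ))) = 1 / ((m:ℝ) * ((1/(n:ℝ)) * Sz)) := by
    rw [eq_div_iff (by positivity)]
    field_simp
  rw [← mul_assoc, this]
end
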